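/- arXiv:2001.02648 — 3 statements merged into one kernel-verified Lean document; each statement's English description precedes it below -/
import Mathlib

section
/- Let α be a growth class, i.e., an equivalence class of functions in Ω∞ under the relation f ∼ g ⟺ ∃k, f ≺ gᵏ ∧ g ≺ fᵏ (where f ≺ g means f(n) < g(n) for all sufficiently large n, and gᵏ is the k-fold composition). Then the set S_α(ω) = {ρ ∈ Perm(ℕ) : ρ and ρ⁻¹ are each bounded by some function in α} is a subgroup of the group of all permutations of ℕ. -/
/-- Ω∞ : functions g : ℕ → ℕ with g(n+1) ≥ g(n) > n for all n. -/
def OmegaInf (g : ℕ → ℕ) : Prop := ∀ n : ℕ, n < g n ∧ g n ≤ g (n + 1)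

/-- f ≺ g : f(n) < g(n) for all sufficiently large n. -/
def Prec (f g : ℕ → ℕ) : Prop := ∃ n₀ : ℕ, ∀ n > n₀, f n < g n

/-- f ∼ g : ∃ k, f ≺ g^[k] and g ≺ f^[k]. -/
def SimGrowth (f g : ℕ → ℕ) : Prop := ∃ k : ℕ, Prec f (g^[k]) ∧ Prec g (f^[k])

/-- ρ is bounded by g if for all n and m ≤ n, ρ(m) ≤ g(n). -/
def BoundedBy (ρ : Equiv.Perm ℕ) (g : ℕ → ℕ) : Prop :=
  ∀ n m : ℕ, m ≤ n → ρ m ≤ g n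

lemma OmegaInf.mono {g : ℕ → ℕ} (hg : OmegaInf g) : Monotone g :=
  monotone_nat_of_le_succ fun n => (hg n).2

lemma OmegaInf.lt_self {g : ℕ → ℕ} (hg : OmegaInf g) (n : ℕ) : n < g n := (hg n).1

lemma OmegaInf.le_iterate {g : ℕ → ℕ} (hg : OmegaInf g) (k n : ℕ) : n ≤ g^[k] n := by
  induction k with
  | zero => simp
  | succ k ih =>
    rw [Function.iterate_succ_apply']
    exact ih.trans (hg.lt_self _).le

lemma OmegaInf.iterate_le_iterate {g : ℕ → ℕ} (hg : OmegaInf g) {a b : ℕ} (hab : a ≤ b)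
    (n : ℕ) : g^[a] n ≤ g^[b] n := by
  obtain ⟨c, rfl⟩ := Nat.exists_eq_add_of_le hab
  rw [Function.iterate_add_apply]
  exact (hg.mono.iterate a) (hg.le_iterate c n)

lemma iterate_le_of_le {g G : ℕ → ℕ} (hgG : ∀ m, g m ≤ G m) (hG : Monotone G)
    (k n : ℕ) : g^[k] n ≤ G^[k] n := by
  induction k with
  | zero => simp
  | succ k ih =>
    rw [Function.iterate_succ_apply', Function.iterate_succ_apply']
    exact (hgG _).trans (hG ih)

lemma OmegaInf.comp {g h : ℕ → ℕ} (hg : OmegaInf g) (hh : OmegaInf h) :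
    OmegaInf (g ∘ h) := fun n =>
  ⟨(hh.lt_self n).trans_le (hg.le_iterate 1 _ |>.trans (by simp)),
    hg.mono (hh.mono (Nat.le_succ n))⟩

lemma SimGrowth.comp {f g h : ℕ → ℕ} (hf : OmegaInf f) (hg : OmegaInf g) (hh : OmegaInf h)
    (h1 : SimGrowth f g) (h2 : SimGrowth f h) : SimGrowth f (g ∘ h) := by
  obtain ⟨k₁, ⟨a₁, hfg⟩, ⟨b₁, hgf⟩⟩ := h1
  obtain ⟨k₂, ⟨a₂, hfh⟩, ⟨b₂, hhf⟩⟩ := h2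
  refine ⟨k₁ + k₂, ⟨a₁, fun n hn => ?_⟩, ⟨max b₁ b₂, fun n hn => ?_⟩⟩
  · -- f ≺ (g∘h)^[k₁+k₂]
    have h1 : g^[k₁] n ≤ (g ∘ h)^[k₁] n := by
      refine iterate_le_of_le (fun m => ?_) (hg.comp hh).mono k₁ n
      exact hg.mono (hh.lt_self m).le
    calc f n < g^[k₁] n := hfg n hn
      _ ≤ (g ∘ h)^[k₁] n := h1
      _ ≤ (g ∘ h)^[k₁ + k₂] n := (hg.comp hh).iterate_le_iterate (Nat.le_add_right _ _) n
  · -- g ∘ h ≺ f^[k₁+k₂]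
    have hn1 : n > b₁ := lt_of_le_of_lt (le_max_left _ _) hn
    have hn2 : n > b₂ := lt_of_le_of_lt (le_max_right _ _) hn
    have hhn : h n > b₁ := hn1.trans (hh.lt_self n)
    calc g (h n) < f^[k₁] (h n) := hgf _ hhn
      _ ≤ f^[k₁] (f^[k₂] n) := (hf.mono.iterate k₁) (hhf n hn2).le
      _ = f^[k₁ + k₂] n := (Function.iterate_add_apply f k₁ k₂ n).symm

lemma SimGrowth.refl_of {f : ℕ → ℕ} (hf : OmegaInf f) : SimGrowth f f :=
  ⟨2, ⟨0, fun n _ => by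
      rw [show (2:ℕ) = 1 + 1 from rfl, Function.iterate_add_apply]
      simpa using hf.lt_self (f n)⟩,
    ⟨0, fun n _ => by
      rw [show (2:ℕ) = 1 + 1 from rfl, Function.iterate_add_apply]
      simpa using hf.lt_self (f n)⟩⟩

lemma BoundedBy.mul {ρ σ : Equiv.Perm ℕ} {g h : ℕ → ℕ} (_hh : OmegaInf h)
    (hρ : BoundedBy ρ g) (hσ : BoundedBy σ h) : BoundedBy (ρ * σ) (g ∘ h) := by
  intro n m hmn
  have : σ m ≤ h n := hσ n m hmn
  exact hρ (h n) (σ m) this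

/-- For a growth class α = [f]∼, the set S_α(ω) of permutations ρ such that ρ and ρ⁻¹
are each bounded by some function of the class is a subgroup of Perm(ℕ). -/
theorem growth_class_subgroup (f : ℕ → ℕ) (hf : OmegaInf f) :
    ∃ H : Subgroup (Equiv.Perm ℕ), ∀ ρ : Equiv.Perm ℕ,
      ρ ∈ H ↔
        ((∃ g, OmegaInf g ∧ SimGrowth f g ∧ BoundedBy ρ g) ∧
         (∃ g, OmegaInf g ∧ SimGrowth f g ∧ BoundedBy ρ⁻¹ g)) := by
  refine ⟨{
    carrier := {ρ | (∃ g, OmegaInf g ∧ SimGrowth f g ∧ BoundedBy ρ g) ∧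
      (∃ g, OmegaInf g ∧ SimGrowth f g ∧ BoundedBy ρ⁻¹ g)}
    one_mem' := ?_
    mul_mem' := ?_
    inv_mem' := ?_ }, fun ρ => Iff.rfl⟩
  · rintro ρ σ ⟨⟨g₁, hg₁, hs₁, hb₁⟩, ⟨g₂, hg₂, hs₂, hb₂⟩⟩ ⟨⟨g₃, hg₃, hs₃, hb₃⟩, ⟨g₄, hg₄, hs₄, hb₄⟩⟩
    refine ⟨⟨g₁ ∘ g₃, hg₁.comp hg₃, hs₁.comp hf hg₁ hg₃ hs₃, hb₁.mul hg₃ hb₃⟩,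
      ⟨g₄ ∘ g₂, hg₄.comp hg₂, hs₄.comp hf hg₄ hg₂ hs₂, ?_⟩⟩
    rw [mul_inv_rev]
    exact hb₄.mul hg₂ hb₂
  · have hb : BoundedBy 1 f := fun n m hmn => by
      simpa using hmn.trans (hf.lt_self n).le
    exact ⟨⟨f, hf, SimGrowth.refl_of hf, hb⟩, ⟨f, hf, SimGrowth.refl_of hf, by simpa using hb⟩⟩
  · rintro ρ ⟨h1, h2⟩
    exact ⟨h2, by simpa using h1⟩
end

section
/- Let g : ℕ → ℕ be in Ω∞ with total computable profile, and let E ⊆ Perm(ℕ) be a finite g-chunk. Fix n ∈ ℕ and a supp-morphism σₙ : E → Sₙ. Let m be maximal with g(m) ≤ n. Then for all ρ, ρ' ∈ E with ρ∘ρ' ∈ E, the Hamming distance between σₙ(ρ)·σₙ(ρ') and σₙ(ρ∘ρ') is at most 2(n−m)/n. -/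
/-- Normalized Hamming distance on Sₙ, modelled as permutations of ℕ supported on
{0, …, n-1}: d_H(g,h) = 1 − |Fix(g⁻¹h) ∩ {0,…,n-1}| / n. -/
noncomputable def dHn (n : ℕ) (g h : Equiv.Perm ℕ) : ℝ :=
  1 - ((Finset.range n).filter fun k => (g⁻¹ * h) k = k).card / n

/-- For a g-chunk E and a supp-morphism σ into Sₙ (modelled as permutations of ℕ
fixing every k ≥ n), with m maximal such that g(m) ≤ n, the Hamming distance between
σ(ρ)·σ(ρ') and σ(ρ∘ρ') is at most 2(n−m)/n, for ρ, ρ', ρ∘ρ' ∈ E. -/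
theorem suppMorphism_eps_morphism (g : ℕ → ℕ) (hg : OmegaInf g)
    (E : Finset (Equiv.Perm ℕ)) (hunit : (1 : Equiv.Perm ℕ) ∈ E)
    (hE : ∀ ρ ∈ E, BoundedBy ρ g)
    (n : ℕ) (hn : 0 < n)
    (σ : Equiv.Perm ℕ → Equiv.Perm ℕ)
    (hσ1 : σ 1 = 1)
    (hσsupp : ∀ ρ ∈ E, ∀ k : ℕ, n ≤ k → σ ρ k = k)
    (hσagree : ∀ ρ ∈ E, ∀ k : ℕ, k < n → ρ k < n → σ ρ k = ρ k)
    (m : ℕ) (hm : g m ≤ n) (hmax : ∀ m' : ℕ, g m' ≤ n → m' ≤ m)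
    (ρ ρ' : Equiv.Perm ℕ) (hρ : ρ ∈ E) (hρ' : ρ' ∈ E) (hmul : ρ * ρ' ∈ E) :
    dHn n (σ ρ * σ ρ') (σ (ρ * ρ')) ≤ 2 * ((n : ℝ) - m) / n := by
  have hmn : m < n := lt_of_lt_of_le (hg m).1 hm
  -- count of k < n with τ k ≥ n is at most n - m, for any τ ∈ E
  have badcount : ∀ τ ∈ E,
      ((Finset.range n).filter fun k => n ≤ τ k).card ≤ n - m := by
    intro τ hτ
    have hsub : ((Finset.range n).filter fun k => n ≤ τ k) ⊆
        insert (τ⁻¹ n) (Finset.Ico (m + 1) n) := by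
      intro k hk
      simp only [Finset.mem_filter, Finset.mem_range] at hk
      rcases le_or_gt k m with hkm | hkm
      · have h1 : τ k ≤ n := le_trans (hE τ hτ m k hkm) hm
        have h2 : τ k = n := le_antisymm h1 hk.2
        have : k = τ⁻¹ n := by
          rw [← h2]; exact (Equiv.symm_apply_apply τ k).symm
        simp [this]
      · exact Finset.mem_insert_of_mem (Finset.mem_Ico.2 ⟨hkm, hk.1⟩)
    calc ((Finset.range n).filter fun k => n ≤ τ k).card
        ≤ (insert (τ⁻¹ n) (Finset.Ico (m + 1) n)).card := Finset.card_le_card hsub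
      _ ≤ (Finset.Ico (m + 1) n).card + 1 := Finset.card_insert_le _ _
      _ = (n - (m + 1)) + 1 := by rw [Nat.card_Ico]
      _ = n - m := by omega
  -- non-fixed points are contained in the union of two bad sets
  set f := (σ ρ * σ ρ')⁻¹ * σ (ρ * ρ') with hf
  have hsub2 : ((Finset.range n).filter fun k => ¬ f k = k) ⊆
      ((Finset.range n).filter fun k => n ≤ ρ' k) ∪
      ((Finset.range n).filter fun k => n ≤ (ρ * ρ') k) := by
    intro k hk
    simp only [Finset.mem_filter, Finset.mem_range, Finset.mem_union] at hk ⊢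
    by_contra hcon
    push_neg at hcon
    have h1 : ρ' k < n := hcon.1 hk.1
    have h2 : (ρ * ρ') k < n := hcon.2 hk.1
    have h2' : ρ (ρ' k) < n := h2
    apply hk.2
    have e1 : σ ρ' k = ρ' k := hσagree ρ' hρ' k hk.1 h1
    have e2 : σ ρ (ρ' k) = ρ (ρ' k) := hσagree ρ hρ (ρ' k) h1 h2'
    have e3 : σ (ρ * ρ') k = (ρ * ρ') k := hσagree _ hmul k hk.1 h2
    have : σ (ρ * ρ') k = (σ ρ * σ ρ') k := by
      rw [e3, Equiv.Perm.mul_apply, Equiv.Perm.mul_apply, e1, e2]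
    simp [hf, Equiv.Perm.mul_apply, this]
  have hcard : ((Finset.range n).filter fun k => ¬ f k = k).card ≤ 2 * (n - m) := by
    calc ((Finset.range n).filter fun k => ¬ f k = k).card
        ≤ (((Finset.range n).filter fun k => n ≤ ρ' k) ∪
           ((Finset.range n).filter fun k => n ≤ (ρ * ρ') k)).card :=
          Finset.card_le_card hsub2
      _ ≤ ((Finset.range n).filter fun k => n ≤ ρ' k).card +
          ((Finset.range n).filter fun k => n ≤ (ρ * ρ') k).card :=
          Finset.card_union_le _ _
      _ ≤ (n - m) + (n - m) := Nat.add_le_add (badcount ρ' hρ') (badcount _ hmul)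
      _ = 2 * (n - m) := by ring
  -- arithmetic
  have hsplit : ((Finset.range n).filter fun k => f k = k).card +
      ((Finset.range n).filter fun k => ¬ f k = k).card = n := by
    rw [Finset.card_filter_add_card_filter_not]
    · exact Finset.card_range n
  rw [dHn]
  have hnR : (0 : ℝ) < n := by exact_mod_cast hn
  have hfixed : (n : ℝ) - ((Finset.range n).filter fun k => f k = k).card
      ≤ 2 * ((n : ℝ) - m) := by
    have : (n : ℝ) - ((Finset.range n).filter fun k => f k = k).card
        = ((Finset.range n).filter fun k => ¬ f k = k).card := by
      have h2 : ((((Finset.range n).filter fun k => f k = k).card : ℕ) : ℝ) +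
          ((((Finset.range n).filter fun k => ¬ f k = k).card : ℕ) : ℝ) = (n : ℝ) := by
        exact_mod_cast hsplit
      linarith
    rw [this]
    calc (((Finset.range n).filter fun k => ¬ f k = k).card : ℝ)
        ≤ ((2 * (n - m) : ℕ) : ℝ) := by exact_mod_cast hcard
      _ = 2 * ((n : ℝ) - m) := by
          push_cast [Nat.cast_sub hmn.le]
          ring
  have key : ((Finset.range n).filter fun k => ((σ ρ * σ ρ')⁻¹ * σ (ρ * ρ')) k = k).card
      = ((Finset.range n).filter fun k => f k = k).card := by rw [hf]
  rw [key]
  have heq : 1 - (((Finset.range n).filter fun k => f k = k).card : ℝ) / n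
      = ((n : ℝ) - ((Finset.range n).filter fun k => f k = k).card) / n := by
    rw [sub_div, div_self hnR.ne']
  rw [heq]
  gcongr
end

section
/- Let g : ℕ → ℕ be non-decreasing with g(n) > n, and suppose the chunk E = {id, h, h²} where h is the disjoint-3-cycles permutation (h(3k)=3k+1, h(3k+1)=3k+2, h(3k+2)=3k). Then E is a g-chunk whenever g(n) ≥ n + 2 for all n, and for every n, any supp-morphism σₙ : E → Sₙ with σₙ agreeing with h on all l with h(l) ≤ n satisfies: if m is maximal with g(m) ≤ n, then the number of non-fixed points of σₙ(h)⁻²σₙ(h²) is at most n − m + 5, hence d_H(σₙ(h)², σₙ(h²)) ≤ (n − m + 5)/n. -/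
/-- For g non-decreasing with g(n) ≥ n + 2 > n and h the disjoint-3-cycles
permutation, the chunk E = {id, h, h²} is a g-chunk, and for any supp-morphism
σ : E → Sₙ (modelled inside Perm ℕ, fixing all k ≥ n and agreeing with each ρ ∈ E
wherever possible), if m is maximal with g(m) ≤ n then σ(h)⁻²σ(h²) has at most
n − m + 5 non-fixed points among {0,…,n-1}, hence
d_H(σ(h)², σ(h²)) ≤ (n − m + 5)/n. -/
theorem three_cycle_chunk_example (g : ℕ → ℕ) (hmono : Monotone g)
    (hgt : ∀ n, n < g n) (hg2 : ∀ n, n + 2 ≤ g n)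
    (h : Equiv.Perm ℕ)
    (hdef : ∀ k : ℕ, h (3 * k) = 3 * k + 1 ∧ h (3 * k + 1) = 3 * k + 2 ∧
      h (3 * k + 2) = 3 * k)
    (n : ℕ) (hn : 0 < n)
    (σ : Equiv.Perm ℕ → Equiv.Perm ℕ)
    (hσ1 : σ 1 = 1)
    (hσsupp : ∀ ρ ∈ ({1, h, h ^ 2} : Set (Equiv.Perm ℕ)), ∀ k : ℕ, n ≤ k → σ ρ k = k)
    (hσagree : ∀ ρ ∈ ({1, h, h ^ 2} : Set (Equiv.Perm ℕ)),
      ∀ l : ℕ, l < n → ρ l < n → σ ρ l = ρ l)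
    (m : ℕ) (hm : g m ≤ n) (hmax : ∀ m' : ℕ, g m' ≤ n → m' ≤ m) :
    (∀ ρ ∈ ({1, h, h ^ 2} : Set (Equiv.Perm ℕ)), BoundedBy ρ g) ∧
    ((Finset.range n).filter fun l => (((σ h) ^ 2)⁻¹ * σ (h ^ 2)) l ≠ l).card ≤
      n - m + 5 ∧
    dHn n ((σ h) ^ 2) (σ (h ^ 2)) ≤ ((n : ℝ) - m + 5) / n := by
  have h2def : ∀ k : ℕ, (h ^ 2) (3 * k) = 3 * k + 2 ∧ (h ^ 2) (3 * k + 1) = 3 * k ∧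
      (h ^ 2) (3 * k + 2) = 3 * k + 1 := by
    intro k
    obtain ⟨h0, h1, h2⟩ := hdef k
    refine ⟨?_, ?_, ?_⟩ <;> simp [pow_two, Equiv.Perm.mul_apply, h0, h1, h2]
  have hdec : ∀ l : ℕ, ∃ k r, r < 3 ∧ l = 3 * k + r := by
    intro l; exact ⟨l / 3, l % 3, Nat.mod_lt _ (by norm_num), by omega⟩
  have hmn : m + 2 ≤ n := le_trans (hg2 m) hm
  -- Part 1 : BoundedBy
  have part1 : ∀ ρ ∈ ({1, h, h ^ 2} : Set (Equiv.Perm ℕ)), BoundedBy ρ g := by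
    intro ρ hρ p q hq
    have hgp := hg2 p
    have hlt := hgt p
    rcases hρ with rfl | rfl | rfl
    · simpa using by omega
    · obtain ⟨k, r, hr, rfl⟩ := hdec q
      obtain ⟨h0, h1, h2⟩ := hdef k
      interval_cases r
      · rw [show 3 * k + 0 = 3 * k by ring, h0]; omega
      · rw [h1]; omega
      · rw [h2]; omega
    · obtain ⟨k, r, hr, rfl⟩ := hdec q
      obtain ⟨h0, h1, h2⟩ := h2def k
      interval_cases r
      · rw [show 3 * k + 0 = 3 * k by ring, h0]; omega
      · rw [h1]; omega
      · rw [h2]; omega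
  refine ⟨part1, ?_⟩
  have hmemh : h ∈ ({1, h, h ^ 2} : Set (Equiv.Perm ℕ)) := by simp
  have hmemh2 : (h ^ 2) ∈ ({1, h, h ^ 2} : Set (Equiv.Perm ℕ)) := by
    right; right; rfl
  have agA := hσagree h hmemh
  have agB := hσagree (h ^ 2) hmemh2
  -- Key : agreement away from the boundary
  have key : ∀ l < n, (((σ h) ^ 2)⁻¹ * σ (h ^ 2)) l ≠ l → n ≤ l + 3 := by
    intro l hl hne
    by_contra hc
    push_neg at hc
    apply hne
    obtain ⟨k, r, hr, rfl⟩ := hdec l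
    obtain ⟨h0, h1, h2⟩ := hdef k
    obtain ⟨e0, e1, e2⟩ := h2def k
    have hAB : σ (h ^ 2) (3 * k + r) = ((σ h) ^ 2) (3 * k + r) := by
      interval_cases r
      · have a1 : σ h (3 * k + 0) = 3 * k + 1 := by
          rw [show 3 * k + 0 = 3 * k by ring] at *
          rw [agA (3 * k) (by omega) (by rw [h0]; omega), h0]
        have a2 : σ h (3 * k + 1) = 3 * k + 2 := by
          rw [agA (3 * k + 1) (by omega) (by rw [h1]; omega), h1]
        have b : σ (h ^ 2) (3 * k + 0) = 3 * k + 2 := by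
          rw [show 3 * k + 0 = 3 * k by ring] at *
          rw [agB (3 * k) (by omega) (by rw [e0]; omega), e0]
        rw [b, pow_two, Equiv.Perm.mul_apply, a1, a2]
      · have a1 : σ h (3 * k + 1) = 3 * k + 2 := by
          rw [agA (3 * k + 1) (by omega) (by rw [h1]; omega), h1]
        have a2 : σ h (3 * k + 2) = 3 * k := by
          rw [agA (3 * k + 2) (by omega) (by rw [h2]; omega), h2]
        have b : σ (h ^ 2) (3 * k + 1) = 3 * k := by
          rw [agB (3 * k + 1) (by omega) (by rw [e1]; omega), e1]
        rw [b, pow_two, Equiv.Perm.mul_apply, a1, a2]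
      · have a1 : σ h (3 * k + 2) = 3 * k := by
          rw [agA (3 * k + 2) (by omega) (by rw [h2]; omega), h2]
        have a2 : σ h (3 * k) = 3 * k + 1 := by
          rw [agA (3 * k) (by omega) (by rw [h0]; omega), h0]
        have b : σ (h ^ 2) (3 * k + 2) = 3 * k + 1 := by
          rw [agB (3 * k + 2) (by omega) (by rw [e2]; omega), e2]
        rw [b, pow_two, Equiv.Perm.mul_apply, a1, a2]
    rw [Equiv.Perm.mul_apply, hAB, ← Equiv.Perm.mul_apply, inv_mul_cancel, Equiv.Perm.one_apply]
  -- Cardinality bound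
  have hsub : (Finset.range n).filter (fun l => (((σ h) ^ 2)⁻¹ * σ (h ^ 2)) l ≠ l) ⊆
      Finset.Ico (n - 3) n := by
    intro l hl
    simp only [Finset.mem_filter, Finset.mem_range] at hl
    have := key l hl.1 hl.2
    simp only [Finset.mem_Ico]
    omega
  have hcard3 : ((Finset.range n).filter
      (fun l => (((σ h) ^ 2)⁻¹ * σ (h ^ 2)) l ≠ l)).card ≤ 3 := by
    refine le_trans (Finset.card_le_card hsub) ?_
    rw [Nat.card_Ico]; omega
  have part2 : ((Finset.range n).filter
      (fun l => (((σ h) ^ 2)⁻¹ * σ (h ^ 2)) l ≠ l)).card ≤ n - m + 5 := by omega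
  refine ⟨part2, ?_⟩
  -- distance bound
  have hsplit : ((Finset.range n).filter
        (fun k => (((σ h) ^ 2)⁻¹ * σ (h ^ 2)) k = k)).card +
      ((Finset.range n).filter
        (fun k => ¬ (((σ h) ^ 2)⁻¹ * σ (h ^ 2)) k = k)).card = n := by
    rw [Finset.card_filter_add_card_filter_not, Finset.card_range]
  set F := ((Finset.range n).filter
      (fun k => (((σ h) ^ 2)⁻¹ * σ (h ^ 2)) k = k)).card with hF
  set T := ((Finset.range n).filter
      (fun k => ¬ (((σ h) ^ 2)⁻¹ * σ (h ^ 2)) k = k)).card with hT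
  have hTb : T ≤ n - m + 5 := part2
  have hnR : (0 : ℝ) < n := by exact_mod_cast hn
  have hsplitR : (F : ℝ) + T = n := by exact_mod_cast hsplit
  have hd : dHn n ((σ h) ^ 2) (σ (h ^ 2)) = (T : ℝ) / n := by
    unfold dHn
    rw [← hF]
    field_simp
    linarith
  rw [hd]
  have hTR : (T : ℝ) ≤ (n : ℝ) - m + 5 := by
    have : ((n - m + 5 : ℕ) : ℝ) = (n : ℝ) - m + 5 := by
      push_cast [Nat.cast_sub (by omega : m ≤ n)]; ring
    calc (T : ℝ) ≤ ((n - m + 5 : ℕ) : ℝ) := by exact_mod_cast hTb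
      _ = (n : ℝ) - m + 5 := this
  exact div_le_div_of_nonneg_right hTR hnR.le
end
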